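/- Let A be a nonempty finite set and let q, p : A → ℝ be probability mass functions on A (nonnegative, summing to 1). Assume p(a) > 0 whenever q(a) > 0. Then Σ_{a∈A} (√(p(a)) − √(q(a)))² ≤ Σ_{a∈A, q(a)>0} q(a) · log(q(a)/p(a)). Equivalently, writing h²(p,q) = (1/2) Σ_{a∈A} (√p(a) − √q(a))² and KL(q‖p) = Σ_{a: q(a)>0} q(a) log(q(a)/p(a)), one has 2 h²(p,q) ≤ KL(q‖p). -/

import Mathlib

open Finset
open scoped Classical

theorem stmt12 {A : Type*} [Fintype A] [Nonempty A] (q p : A → ℝ)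
    (hq0 : ∀ a, 0 ≤ q a) (hp0 : ∀ a, 0 ≤ p a)
    (hqsum : ∑ a, q a = 1) (hpsum : ∑ a, p a = 1)
    (hqp : ∀ a, 0 < q a → 0 < p a) :
    ∑ a, (Real.sqrt (p a) - Real.sqrt (q a)) ^ 2 ≤
      ∑ a ∈ Finset.univ.filter (fun a => 0 < q a), q a * Real.log (q a / p a) := by
  set S := Finset.univ.filter (fun a => 0 < q a) with hS
  have hqS : ∀ a ∈ Finset.univ, a ∉ S → q a = 0 := by
    intro a _ ha
    simp only [hS, mem_filter, mem_univ, true_and, not_lt] at ha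
    exact le_antisymm ha (hq0 a)
  -- pointwise key inequality on S
  have key : ∀ a ∈ S, 2 * q a - 2 * Real.sqrt (p a * q a) ≤ q a * Real.log (q a / p a) := by
    intro a ha
    simp only [hS, mem_filter, mem_univ, true_and] at ha
    have hq : 0 < q a := ha
    have hp : 0 < p a := hqp a hq
    have hdiv : 0 < p a / q a := div_pos hp hq
    have hlog : Real.log (Real.sqrt (p a / q a)) ≤ Real.sqrt (p a / q a) - 1 :=
      Real.log_le_sub_one_of_pos (Real.sqrt_pos.mpr hdiv)
    rw [Real.log_sqrt hdiv.le] at hlog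
    have hsqq : 0 < Real.sqrt (q a) := Real.sqrt_pos.mpr hq
    have hsq : Real.sqrt (p a / q a) * q a = Real.sqrt (p a * q a) := by
      calc Real.sqrt (p a / q a) * q a
          = (Real.sqrt (p a) / Real.sqrt (q a)) * (Real.sqrt (q a) * Real.sqrt (q a)) := by
            rw [Real.sqrt_div hp.le, Real.mul_self_sqrt hq.le]
        _ = Real.sqrt (p a) * Real.sqrt (q a) := by field_simp
        _ = Real.sqrt (p a * q a) := (Real.sqrt_mul hp.le _).symm
    have hlog2 : Real.log (q a / p a) = - Real.log (p a / q a) := by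
      rw [← Real.log_inv]
      congr 1
      field_simp
    rw [hlog2]
    have hmul : q a * (Real.log (p a / q a) / 2) ≤ q a * (Real.sqrt (p a / q a) - 1) :=
      mul_le_mul_of_nonneg_left hlog hq.le
    nlinarith [hmul, hsq]
  have hsum_sqrt : ∑ a, Real.sqrt (p a * q a) = ∑ a ∈ S, Real.sqrt (p a * q a) := by
    refine (Finset.sum_subset (Finset.subset_univ S) ?_).symm
    intro a _ ha
    rw [hqS a (mem_univ a) ha, mul_zero, Real.sqrt_zero]
  have hsum_q : ∑ a ∈ S, q a = 1 := by
    rw [← hqsum]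
    exact Finset.sum_subset (Finset.subset_univ S) hqS
  have hLHS : ∑ a, (Real.sqrt (p a) - Real.sqrt (q a)) ^ 2
      = 2 - 2 * ∑ a ∈ S, Real.sqrt (p a * q a) := by
    have : ∀ a ∈ Finset.univ, (Real.sqrt (p a) - Real.sqrt (q a)) ^ 2
        = p a + q a - 2 * Real.sqrt (p a * q a) := by
      intro a _
      rw [sub_sq, Real.sq_sqrt (hp0 a), Real.sq_sqrt (hq0 a), Real.sqrt_mul (hp0 a)]
      ring
    rw [Finset.sum_congr rfl this, ← hsum_sqrt]
    rw [Finset.sum_sub_distrib, Finset.sum_add_distrib, hqsum, hpsum, ← Finset.mul_sum]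
    ring
  calc ∑ a, (Real.sqrt (p a) - Real.sqrt (q a)) ^ 2
      = ∑ a ∈ S, (2 * q a - 2 * Real.sqrt (p a * q a)) := by
        rw [hLHS, Finset.sum_sub_distrib, ← Finset.mul_sum, ← Finset.mul_sum, hsum_q]
        ring
    _ ≤ ∑ a ∈ S, q a * Real.log (q a / p a) := Finset.sum_le_sum key
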